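/- Fix a sphere S^{n−1}(j,r) ⊂ ℝⁿ and a point z ∈ ℝⁿ with d = |z−j| − r > 0. Then sup over x, y ∈ S^{n−1}(j,r) of |x−y|/(|x−z|+|z−y|) equals r/(r+d). -/

import Mathlib

open EuclideanGeometry Metric

lemma exists_unit_orthogonal {n : ℕ} (hn : 2 ≤ n) (u : EuclideanSpace ℝ (Fin n)) :
    ∃ v : EuclideanSpace ℝ (Fin n), ‖v‖ = 1 ∧ inner ℝ u v = (0 : ℝ) := by
  have hK : (ℝ ∙ u) ≠ ⊤ := by
    intro h
    have h1 : Module.finrank ℝ (ℝ ∙ u) ≤ 1 := by simpa using finrank_span_le_card ({u} : Set (EuclideanSpace ℝ (Fin n)))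
    rw [h, finrank_top, finrank_euclideanSpace, Fintype.card_fin] at h1
    omega
  have hbot : (ℝ ∙ u)ᗮ ≠ ⊥ :=
    fun h => hK (Submodule.orthogonal_eq_bot_iff.mp h)
  obtain ⟨w, hw, hw0⟩ := Submodule.exists_mem_ne_zero_of_ne_bot hbot
  refine ⟨‖w‖⁻¹ • w, ?_, ?_⟩
  · rw [norm_smul, norm_inv, norm_norm, inv_mul_cancel₀ (norm_ne_zero_iff.2 hw0)]
  · have := hw u (Submodule.mem_span_singleton_self u)
    rw [real_inner_smul_right, real_inner_comm] at *
    rw [this, mul_zero]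

lemma norm_combo_sq {n : ℕ} {u v : EuclideanSpace ℝ (Fin n)} (hu : ‖u‖ = 1) (hv : ‖v‖ = 1)
    (huv : inner ℝ u v = (0 : ℝ)) (a b : ℝ) : ‖a • u + b • v‖ ^ 2 = a ^ 2 + b ^ 2 := by
  rw [norm_add_sq_real, norm_smul, norm_smul, real_inner_smul_left, real_inner_smul_right, huv]
  simp [hu, hv, mul_pow, sq_abs]

set_option maxHeartbeats 1000000 in
theorem stmt_12 {n : ℕ} (hn : 2 ≤ n) (j z : EuclideanSpace ℝ (Fin n)) (r d : ℝ)
    (hr : 0 < r) (hd : d = dist z j - r) (hd0 : 0 < d) :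
    sSup {q : ℝ | ∃ x ∈ Metric.sphere j r, ∃ y ∈ Metric.sphere j r,
        q = dist x y / (dist x z + dist z y)} = r / (r + d) := by
  set R := r + d with hR
  have hR0 : 0 < R := by positivity
  have hzj : dist z j = R := by rw [hR]; linarith [hd]
  -- upper bound for all elements
  have hub : ∀ q ∈ {q : ℝ | ∃ x ∈ Metric.sphere j r, ∃ y ∈ Metric.sphere j r,
      q = dist x y / (dist x z + dist z y)}, q ≤ r / R := by
    rintro q ⟨x, hx, y, hy, rfl⟩
    rw [Metric.mem_sphere] at hx hy
    have hxz : d ≤ dist x z := by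
      have h := dist_triangle z x j
      rw [hzj, hx] at h; rw [dist_comm x z]; linarith
    have hzy : d ≤ dist z y := by
      have h := dist_triangle z y j
      rw [hzj, hy] at h; linarith
    have hden : 0 < dist x z + dist z y := by linarith
    rw [div_le_div_iff₀ hden hR0]
    have hpt := EuclideanGeometry.mul_dist_le_mul_dist_add_mul_dist x z y j
    rw [hzj, hx, hy] at hpt
    linarith [hpt]
  -- orthonormal pair
  set u : EuclideanSpace ℝ (Fin n) := R⁻¹ • (z - j) with hu_def
  have hu : ‖u‖ = 1 := by
    rw [hu_def, norm_smul, norm_inv, Real.norm_eq_abs, abs_of_pos hR0,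
      ← dist_eq_norm, hzj, inv_mul_cancel₀ hR0.ne']
  obtain ⟨v, hv, huv⟩ := exists_unit_orthogonal hn u
  have hz : z = j + R • u := by
    rw [hu_def, smul_smul, mul_inv_cancel₀ hR0.ne', one_smul]; module
  set t := Real.sqrt (R ^ 2 - r ^ 2) with ht_def
  have hRr : r ^ 2 < R ^ 2 := by nlinarith
  have ht2 : t ^ 2 = R ^ 2 - r ^ 2 := Real.sq_sqrt (by linarith)
  have ht : 0 < t := Real.sqrt_pos.2 (by linarith)
  set x := j + (r ^ 2 / R) • u + ((r * t) / R) • v with hx_def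
  set y := j + (r ^ 2 / R) • u - ((r * t) / R) • v with hy_def
  have hxj : dist x j = r := by
    have h1 : x - j = (r ^ 2 / R) • u + ((r * t) / R) • v := by rw [hx_def]; module
    have h2 := norm_combo_sq hu hv huv (r ^ 2 / R) ((r * t) / R)
    rw [dist_eq_norm, h1]
    have : ‖(r ^ 2 / R) • u + ((r * t) / R) • v‖ ^ 2 = r ^ 2 := by
      rw [h2]; field_simp; nlinarith [ht2]
    calc ‖(r ^ 2 / R) • u + ((r * t) / R) • v‖ = Real.sqrt (‖(r ^ 2 / R) • u + ((r * t) / R) • v‖ ^ 2) := (Real.sqrt_sq (norm_nonneg _)).symm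
      _ = Real.sqrt (r ^ 2) := by rw [this]
      _ = r := Real.sqrt_sq (by positivity)
  have hyj : dist y j = r := by
    have h1 : y - j = (r ^ 2 / R) • u + (-((r * t) / R)) • v := by
      rw [hy_def]; rw [neg_smul]; module
    have h2 := norm_combo_sq hu hv huv (r ^ 2 / R) (-((r * t) / R))
    rw [dist_eq_norm, h1]
    have : ‖(r ^ 2 / R) • u + (-((r * t) / R)) • v‖ ^ 2 = r ^ 2 := by
      rw [h2]; field_simp; nlinarith [ht2]
    calc ‖(r ^ 2 / R) • u + (-((r * t) / R)) • v‖ = Real.sqrt (‖(r ^ 2 / R) • u + (-((r * t) / R)) • v‖ ^ 2) := (Real.sqrt_sq (norm_nonneg _)).symm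
      _ = Real.sqrt (r ^ 2) := by rw [this]
      _ = r := Real.sqrt_sq (by positivity)
  have hxz : dist x z = t := by
    have h1 : x - z = (r ^ 2 / R - R) • u + ((r * t) / R) • v := by
      rw [hx_def, hz, sub_smul]; module
    have h2 := norm_combo_sq hu hv huv (r ^ 2 / R - R) ((r * t) / R)
    rw [dist_eq_norm, h1]
    have : ‖(r ^ 2 / R - R) • u + ((r * t) / R) • v‖ ^ 2 = t ^ 2 := by
      rw [h2]; field_simp; nlinarith [ht2]
    calc ‖(r ^ 2 / R - R) • u + ((r * t) / R) • v‖ = Real.sqrt (‖(r ^ 2 / R - R) • u + ((r * t) / R) • v‖ ^ 2) := (Real.sqrt_sq (norm_nonneg _)).symm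
      _ = Real.sqrt (t ^ 2) := by rw [this]
      _ = t := Real.sqrt_sq (by positivity)
  have hzy : dist z y = t := by
    have h1 : z - y = (R - r ^ 2 / R) • u + ((r * t) / R) • v := by
      rw [hy_def, hz, sub_smul]; module
    have h2 := norm_combo_sq hu hv huv (R - r ^ 2 / R) ((r * t) / R)
    rw [dist_eq_norm, h1]
    have : ‖(R - r ^ 2 / R) • u + ((r * t) / R) • v‖ ^ 2 = t ^ 2 := by
      rw [h2]; field_simp; nlinarith [ht2]
    calc ‖(R - r ^ 2 / R) • u + ((r * t) / R) • v‖ = Real.sqrt (‖(R - r ^ 2 / R) • u + ((r * t) / R) • v‖ ^ 2) := (Real.sqrt_sq (norm_nonneg _)).symm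
      _ = Real.sqrt (t ^ 2) := by rw [this]
      _ = t := Real.sqrt_sq (by positivity)
  have hxy : dist x y = 2 * (r * t) / R := by
    have h1 : x - y = (2 * (r * t) / R) • v := by
      rw [hx_def, hy_def]
      rw [show (2 * (r * t) / R) • v = ((r*t)/R) • v + ((r*t)/R) • v by
        rw [← add_smul]; ring_nf]
      module
    rw [dist_eq_norm, h1, norm_smul, hv, Real.norm_eq_abs, mul_one,
      abs_of_pos (by positivity)]
  have hmem : r / R ∈ {q : ℝ | ∃ x ∈ Metric.sphere j r, ∃ y ∈ Metric.sphere j r,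
      q = dist x y / (dist x z + dist z y)} := by
    refine ⟨x, Metric.mem_sphere.2 hxj, y, Metric.mem_sphere.2 hyj, ?_⟩
    rw [hxy, hxz, hzy]
    field_simp
    ring
  exact le_antisymm (csSup_le ⟨_, hmem⟩ hub) (le_csSup ⟨r / R, hub⟩ hmem)
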